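/- arXiv:2005.14098 — 4 statements merged into one kernel-verified Lean document; each statement's English description precedes it below -/
import Mathlib

section
/- Let (f,g) be a state of a 9×9 Sudoku grid satisfying conditions S1 and S2, and suppose it is a final state, i.e., f(c) ≠ 0 for every cell c. Then f is a valid Sudoku solution: every cell contains a digit from 1 to 9, and each digit appears exactly once in every row, every column, and every 3×3 block. -/
/-- Two cells of the 9×9 grid lie in a common group (row, column, or 3×3 block). -/
def SameGroup (c c' : Fin 9 × Fin 9) : Prop :=
  c.1 = c'.1 ∨ c.2 = c'.2 ∨
    ((c.1 : ℕ) / 3 = (c'.1 : ℕ) / 3 ∧ (c.2 : ℕ) / 3 = (c'.2 : ℕ) / 3)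

/-- Condition S1: every candidate set is nonempty. -/
def S1 (g : Fin 9 × Fin 9 → Finset ℕ) : Prop := ∀ c, (g c).Nonempty

/-- Condition S2: a digit is ruled out at a cell if the cell holds a different
nonzero digit, or some other cell in a common group holds that digit. -/
def S2 (f : Fin 9 × Fin 9 → ℕ) (g : Fin 9 × Fin 9 → Finset ℕ) : Prop :=
  ∀ c, ∀ n ∈ Finset.Icc 1 9,
    ((f c ≠ 0 ∧ f c ≠ n) ∨ ∃ c', c' ≠ c ∧ SameGroup c c' ∧ f c' = n) → n ∉ g c

/-- Groups of the 9×9 grid: rows, columns, and 3×3 blocks. -/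
def IsGroup (G : Finset (Fin 9 × Fin 9)) : Prop :=
  (∃ i, G = Finset.univ.filter (fun c => c.1 = i)) ∨
  (∃ j, G = Finset.univ.filter (fun c => c.2 = j)) ∨
  (∃ bi bj : Fin 3, G = Finset.univ.filter
      (fun c => (c.1 : ℕ) / 3 = (bi : ℕ) ∧ (c.2 : ℕ) / 3 = (bj : ℕ)))

/-- A Sudoku solution: every cell holds a digit 1–9 and each digit appears
exactly once in every group. -/
def IsSolution (f : Fin 9 × Fin 9 → ℕ) : Prop :=
  (∀ c, f c ∈ Finset.Icc 1 9) ∧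
  ∀ G : Finset (Fin 9 × Fin 9), IsGroup G →
    ∀ n ∈ Finset.Icc 1 9, ∃! c, c ∈ G ∧ f c = n

theorem stmt1 (f : Fin 9 × Fin 9 → ℕ) (g : Fin 9 × Fin 9 → Finset ℕ)
    (hf : ∀ c, f c ≤ 9) (hg : ∀ c, g c ⊆ Finset.Icc 1 9)
    (h1 : S1 g) (h2 : S2 f g) (hfinal : ∀ c, f c ≠ 0) :
    (∀ c, f c ∈ Finset.Icc 1 9) ∧
      ∀ G : Finset (Fin 9 × Fin 9), IsGroup G →
        ∀ n ∈ Finset.Icc 1 9, ∃! c, c ∈ G ∧ f c = n := by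
  have key : ∀ c, f c ∈ Finset.Icc 1 9 ∧
      ∀ c', c' ≠ c → SameGroup c c' → f c' ≠ f c := by
    intro c
    obtain ⟨n, hn⟩ := h1 c
    have hn9 := hg c hn
    have hfc : f c = n := by
      by_contra h
      exact h2 c n hn9 (Or.inl ⟨hfinal c, h⟩) hn
    refine ⟨by rw [hfc]; exact hn9, ?_⟩
    intro c' hne hsg heq
    exact h2 c n hn9 (Or.inr ⟨c', hne, hsg, by rw [heq, hfc]⟩) hn
  refine ⟨fun c => (key c).1, ?_⟩
  intro G hG n hn
  have hcard : G.card = 9 := by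
    rcases hG with ⟨i, rfl⟩ | ⟨j, rfl⟩ | ⟨bi, bj, rfl⟩
    · fin_cases i <;> decide
    · fin_cases j <;> decide
    · fin_cases bi <;> fin_cases bj <;> decide
  have hsg : ∀ c ∈ G, ∀ c' ∈ G, SameGroup c c' := by
    rcases hG with ⟨i, rfl⟩ | ⟨j, rfl⟩ | ⟨bi, bj, rfl⟩ <;>
      intro c hc c' hc' <;> simp [Finset.mem_filter] at hc hc' <;>
      unfold SameGroup
    · exact Or.inl (hc.trans hc'.symm)
    · exact Or.inr (Or.inl (hc.trans hc'.symm))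
    · exact Or.inr (Or.inr ⟨hc.1.trans hc'.1.symm, hc.2.trans hc'.2.symm⟩)
  have hinj : Set.InjOn f ↑G := by
    intro a ha b hb hab
    by_contra hne
    exact (key a).2 b (fun h => hne h.symm) (hsg a ha b hb) hab.symm
  have himg : G.image f = Finset.Icc 1 9 := by
    apply Finset.eq_of_subset_of_card_le
    · intro m hm
      obtain ⟨c, _, rfl⟩ := Finset.mem_image.mp hm
      exact (key c).1
    · rw [Finset.card_image_of_injOn hinj, hcard]
      decide
  have hnmem : n ∈ G.image f := by rw [himg]; exact hn
  obtain ⟨c, hc, hfc⟩ := Finset.mem_image.mp hnmem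
  refine ⟨c, ⟨hc, hfc⟩, ?_⟩
  rintro c' ⟨hc', hfc'⟩
  exact hinj hc' hc (hfc'.trans hfc.symm)
end

section
/- Let Q be the set of Sudoku states (f,g) on the 9×9 grid satisfying S1 and S2, and let R be a state-transition relation on Q such that: (i) whenever (f,g) R (f',g'), we have g'(c) ⊆ g(c) for every cell c; and (ii) for all q1, q2, q3 with q1 R q2 and q2 R q3, if the candidate components of q1 and q2 are equal then q2 = q3. Then for any infinite sequence q_0, q_1, q_2, ... with q_s R q_{s+1} for all s, there exists k ≤ 649 such that q_s = q_k for all s ≥ k. -/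
theorem stmt6 {Q : Type*} (F : Q → Fin 9 × Fin 9 → ℕ)
    (G : Q → Fin 9 × Fin 9 → Finset ℕ)
    (hrange : ∀ q c, G q c ⊆ Finset.Icc 1 9)
    (hS1 : ∀ q, S1 (G q)) (hS2 : ∀ q, S2 (F q) (G q))
    (R : Q → Q → Prop)
    (hmono : ∀ q q', R q q' → ∀ c, G q' c ⊆ G q c)
    (hA : ∀ q1 q2 q3 : Q, R q1 q2 → R q2 q3 → G q1 = G q2 → q2 = q3)
    (q : ℕ → Q) (hR : ∀ s, R (q s) (q (s + 1))) :
    ∃ k ≤ 649, ∀ s ≥ k, q s = q k := by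
  classical
  set m : ℕ → ℕ := fun s => ∑ c : Fin 9 × Fin 9, (G (q s) c).card with hm
  have hcard9 : ∀ s c, (G (q s) c).card ≤ 9 := by
    intro s c
    have := Finset.card_le_card (hrange (q s) c)
    simpa using this
  have hlb : ∀ s, 81 ≤ m s := by
    intro s
    have h1 : ∀ c : Fin 9 × Fin 9, 1 ≤ (G (q s) c).card := fun c =>
      Finset.card_pos.mpr (hS1 (q s) c)
    calc (81 : ℕ) = ∑ _c : Fin 9 × Fin 9, 1 := by simp
      _ ≤ m s := Finset.sum_le_sum fun c _ => h1 c
  have hub : m 0 ≤ 729 := by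
    calc m 0 ≤ ∑ _c : Fin 9 × Fin 9, 9 := Finset.sum_le_sum fun c _ => hcard9 0 c
      _ = 729 := by simp
  have hdec : ∀ s, G (q s) ≠ G (q (s + 1)) → m (s + 1) < m s := by
    intro s hne
    obtain ⟨c, hc⟩ : ∃ c, G (q (s + 1)) c ≠ G (q s) c := by
      by_contra h
      push_neg at h
      exact hne (funext fun c => (h c).symm)
    exact Finset.sum_lt_sum (fun i _ => Finset.card_le_card (hmono _ _ (hR s) i))
      ⟨c, Finset.mem_univ c,
        Finset.card_lt_card (lt_of_le_of_ne (hmono _ _ (hR s) c) hc)⟩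
  have key : ∃ s ≤ 648, G (q s) = G (q (s + 1)) := by
    by_contra h
    push_neg at h
    have hstep : ∀ s ≤ 649, m s + s ≤ m 0 := by
      intro s hs
      induction s with
      | zero => simp
      | succ n ih =>
        have h1 := hdec n (h n (by omega))
        have h2 := ih (by omega)
        omega
    have h3 := hstep 649 le_rfl
    have h4 := hlb 649
    omega
  obtain ⟨s, hs, hGeq⟩ := key
  refine ⟨s + 1, by omega, ?_⟩
  have hnext : ∀ t, q (s + 1 + t) = q (s + 1 + t + 1) := by
    intro t
    induction t with
    | zero =>
      have := hA (q s) (q (s + 1)) (q (s + 2)) (hR s) (hR (s + 1)) hGeq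
      simpa using this
    | succ n ih =>
      have hG : G (q (s + 1 + n)) = G (q (s + 1 + n + 1)) := by rw [← ih]
      have := hA (q (s + 1 + n)) (q (s + 1 + n + 1)) (q (s + 1 + n + 2))
        (hR (s + 1 + n)) (hR (s + 1 + n + 1)) hG
      exact this
  have hconst : ∀ t, q (s + 1 + t) = q (s + 1) := by
    intro t
    induction t with
    | zero => rfl
    | succ n ih =>
      exact ((hnext n).symm).trans ih
  intro t ht
  obtain ⟨d, rfl⟩ := Nat.exists_eq_add_of_le ht
  exact hconst d
end

section
/- Consider a 9×9 Sudoku puzzle whose clues use at most 7 distinct digits from {1,...,9}. If the puzzle has at least one solution, then it has at least two distinct solutions; in particular, it is not proper. -/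
theorem stmt9 (P : Fin 9 × Fin 9 → Option ℕ)
    (D : Finset ℕ) (hD : D.card ≤ 7)
    (hclues : ∀ c n, P c = some n → n ∈ D)
    (hsol : ∃ f, IsSolution f ∧ ∀ c n, P c = some n → f c = n) :
    ∃ f f' : Fin 9 × Fin 9 → ℕ,
      (IsSolution f ∧ ∀ c n, P c = some n → f c = n) ∧
      (IsSolution f' ∧ ∀ c n, P c = some n → f' c = n) ∧ f ≠ f' := by
  obtain ⟨f, hf, hfP⟩ := hsol
  -- find two digits a ≠ b in Icc 1 9 \ D
  have hcard : 1 < (Finset.Icc 1 9 \ D).card := by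
    have h1 : (Finset.Icc 1 9 \ D).card + (Finset.Icc 1 9 ∩ D).card
        = (Finset.Icc (1:ℕ) 9).card := Finset.card_sdiff_add_card_inter _ _
    have h2 : (Finset.Icc 1 9 ∩ D).card ≤ D.card := Finset.card_le_card
      (Finset.inter_subset_right)
    have h3 : (Finset.Icc (1:ℕ) 9).card = 9 := by decide
    omega
  obtain ⟨a, ha, b, hb, hab⟩ := Finset.one_lt_card.mp hcard
  obtain ⟨haI, haD⟩ := Finset.mem_sdiff.mp ha
  obtain ⟨hbI, hbD⟩ := Finset.mem_sdiff.mp hb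
  set σ : ℕ → ℕ := fun n => if n = a then b else if n = b then a else n with hσ
  have hσσ : ∀ n, σ (σ n) = n := by
    intro n
    simp only [hσ]
    split_ifs with h1 h2 h3 h4 h5 <;> simp_all
  have hσI : ∀ n ∈ Finset.Icc 1 9, σ n ∈ Finset.Icc (1:ℕ) 9 := by
    intro n hn
    simp only [hσ]
    split_ifs <;> assumption
  -- f' := σ ∘ f
  refine ⟨f, fun c => σ (f c), ⟨hf, hfP⟩, ⟨⟨fun c => hσI _ (hf.1 c), ?_⟩, ?_⟩, ?_⟩
  · intro G hG n hn
    obtain ⟨c, ⟨hcG, hcv⟩, hcu⟩ := hf.2 G hG (σ n) (hσI n hn)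
    refine ⟨c, ⟨hcG, show σ (f c) = n by rw [hcv, hσσ]⟩, ?_⟩
    rintro c' ⟨hc'G, hc'v⟩
    exact hcu c' ⟨hc'G, by rw [← hσσ (f c'), show σ (f c') = n from hc'v]⟩
  · intro c n hc
    have hn : f c = n := hfP c n hc
    have hnD : n ∈ D := hclues c n hc
    have hna : n ≠ a := fun h => haD (h ▸ hnD)
    have hnb : n ≠ b := fun h => hbD (h ▸ hnD)
    simp [hn, hσ, hna, hnb]
  · intro heq
    obtain ⟨c, ⟨_, hcv⟩, _⟩ := hf.2 (Finset.univ.filter (fun c => c.1 = 0))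
      (Or.inl ⟨0, rfl⟩) a haI
    have : f c = σ (f c) := congrFun heq c
    rw [hcv] at this
    simp only [hσ, if_pos rfl] at this
    exact hab this
end

section
/- Let A and B be two groups of the 9×9 Sudoku grid with |A ∩ B| = 3 (e.g., a row or column and a 3×3 block intersecting in 3 cells). Let f be a Sudoku solution and n a digit in {1,...,9}. If no cell c ∈ A \ B satisfies f(c) = n, then no cell c ∈ B \ A satisfies f(c) = n. -/
theorem stmt15 (A B : Finset (Fin 9 × Fin 9)) (hA : IsGroup A) (hB : IsGroup B)
    (hAB : (A ∩ B).card = 3)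
    (f : Fin 9 × Fin 9 → ℕ) (hf : IsSolution f)
    (n : ℕ) (hn : n ∈ Finset.Icc 1 9)
    (hAdiff : ∀ c ∈ A \ B, f c ≠ n) :
    ∀ c ∈ B \ A, f c ≠ n := by
  intro c hc hfc
  obtain ⟨a, ⟨haA, hfa⟩, hauniq⟩ := hf.2 A hA n hn
  have haB : a ∈ B := by
    by_contra hnB
    exact hAdiff a (Finset.mem_sdiff.mpr ⟨haA, hnB⟩) hfa
  obtain ⟨b, hb, hbuniq⟩ := hf.2 B hB n hn
  have h1 := hbuniq a ⟨haB, hfa⟩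
  have h2 := hbuniq c ⟨(Finset.mem_sdiff.mp hc).1, hfc⟩
  exact (Finset.mem_sdiff.mp hc).2 (h2.trans h1.symm ▸ haA)
end
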